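/- Let σ²_X > 0, and for P ≥ 0 define g(P) = 1/W_{-1}(−e^{−(2P+1)}) where W_{-1} is the secondary real branch of the Lambert W function. If (D,P) satisfies |σ²_X − D|/σ²_X ≤ −g(P), then with a = (1/2)(1 − D/σ²_X − g(P)) and σ²_W = D − (1−a)²σ²_X, one has (1−a)²σ²_X + σ²_W = D and the direct KL divergence constraint holds with equality: log(σ²_X̂/σ²_X) + σ²_X/σ²_X̂ − 1 = 2P, where σ²_X̂ = a²σ²_X + σ²_W. -/

import Mathlib

/-- Case III of the scalar Gaussian RDPF under MSE distortion and direct KL perception.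
Here `g(P) = 1/W_{-1}(−e^{−(2P+1)})`, where `W_{-1}` is the secondary real branch of
the Lambert W function, encoded by a real `w ≤ −1` with `w e^w = −e^{−(2P+1)}`.
If `|σX² − D|/σX² ≤ −g(P)`, then with `a = (1/2)(1 − D/σX² − g(P))` and
`σW² = D − (1−a)² σX²`, the distortion constraint holds with equality and the direct KL
perception constraint holds with equality. -/
theorem scalar_gaussian_rdpf_kl_caseIII (σX D P : ℝ)
    (hσ : 0 < σX) (hD : 0 < D) (hP : 0 ≤ P)
    (w : ℝ) (hw_branch : w ≤ -1)
    (hw_eq : w * Real.exp w = -Real.exp (-(2 * P + 1)))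
    (hregion : |σX ^ 2 - D| / σX ^ 2 ≤ -(1 / w)) :
    let g : ℝ := 1 / w
    let a : ℝ := (1 / 2) * (1 - D / σX ^ 2 - g)
    let σW2 : ℝ := D - (1 - a) ^ 2 * σX ^ 2
    let σXh2 : ℝ := a ^ 2 * σX ^ 2 + σW2
    (1 - a) ^ 2 * σX ^ 2 + σW2 = D ∧
    Real.log (σXh2 / σX ^ 2) + σX ^ 2 / σXh2 - 1 = 2 * P := by
  intro g a σW2 σXh2
  have hwneg : w < 0 := lt_of_le_of_lt hw_branch (by norm_num)
  have hwne : w ≠ 0 := ne_of_lt hwneg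
  have hσne : σX ^ 2 ≠ 0 := by positivity
  have hσXh2 : σXh2 = σX ^ 2 * (-1 / w) := by
    show a ^ 2 * σX ^ 2 + (D - (1 - a) ^ 2 * σX ^ 2) = _
    show ((1:ℝ)/2 * (1 - D / σX ^ 2 - 1/w)) ^ 2 * σX ^ 2 +
      (D - (1 - (1:ℝ)/2 * (1 - D / σX ^ 2 - 1/w)) ^ 2 * σX ^ 2) = _
    field_simp
    ring
  -- log(-w) = -(2P+1) - w
  have hlog : Real.log (-w) = -(2 * P + 1) - w := by
    have h1 : (-w) * Real.exp w = Real.exp (-(2 * P + 1)) := by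
      have := hw_eq; linarith [hw_eq]
    have h2 : Real.log ((-w) * Real.exp w) = -(2 * P + 1) := by
      rw [h1, Real.log_exp]
    rw [Real.log_mul (by linarith) (Real.exp_ne_zero w), Real.log_exp] at h2
    linarith
  constructor
  · show (1 - a) ^ 2 * σX ^ 2 + (D - (1 - a) ^ 2 * σX ^ 2) = D
    ring
  · rw [hσXh2]
    have hpos : (0:ℝ) < -1 / w := by
      rw [div_pos_iff]; right; constructor <;> linarith
    have hq : σX ^ 2 * (-1 / w) / σX ^ 2 = -1 / w := by
      field_simp
    have h2 : σX ^ 2 / (σX ^ 2 * (-1 / w)) = -w := by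
      field_simp
    have hll : Real.log (-1 / w) = -(Real.log (-w)) := by
      rw [neg_div, Real.log_neg_eq_log, one_div, Real.log_inv, Real.log_neg_eq_log]
    rw [hq, h2, hll, hlog]
    ring
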